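/- Let R(i) denote the set of points on row i of the free space diagram reachable from the feasible set F₀ on row 0 by a monotone feasible curve. Then for any 0 ≤ i < j ≤ m and any point u ∈ R(i), the set of points on row j reachable from u equals R(j) ∩ [lp_j(u), rp_j(u)], i.e., the reachable set of u on row j is the intersection of the global reachable set R(j) with the horizontal interval between u's left and right pointers on row j. -/

import Mathlib

open Set

/-- A plane curve is monotone if it is non-decreasing in both coordinates. -/
def MonotoneCurve (γ : ℝ → ℝ × ℝ) : Prop :=
  MonotoneOn (fun t => (γ t).1) (Icc 0 1) ∧ MonotoneOn (fun t => (γ t).2) (Icc 0 1)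

/-- `u ↝ v`: there is a continuous monotone curve from `u` to `v` lying in the free space `F`. -/
def MonFeasible (F : Set (ℝ × ℝ)) (u v : ℝ × ℝ) : Prop :=
  ∃ γ : ℝ → ℝ × ℝ, ContinuousOn γ (Icc 0 1) ∧ γ 0 = u ∧ γ 1 = v ∧
    (∀ t ∈ Icc (0:ℝ) 1, γ t ∈ F) ∧ MonotoneCurve γ

/-- `Reach_j(S)`: points on the row `y = j` reachable from some point of `S`. -/
def ReachRow (F : Set (ℝ × ℝ)) (j : ℝ) (S : Set (ℝ × ℝ)) : Set (ℝ × ℝ) :=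
  {v : ℝ × ℝ | v.2 = j ∧ ∃ u ∈ S, MonFeasible F u v}

/-- `R(j)`: points on row `y = j` reachable from the feasible points `F₀` of row `y = 0`. -/
def Rrow (F : Set (ℝ × ℝ)) (j : ℝ) : Set (ℝ × ℝ) :=
  ReachRow F j {u ∈ F | u.2 = 0}

lemma clamp_mem (x : ℝ) : min (max x 0) 1 ∈ Icc (0:ℝ) 1 :=
  ⟨le_min (le_max_right _ _) zero_le_one, min_le_right _ _⟩

lemma clamp_mono : Monotone (fun x : ℝ => min (max x 0) 1) :=
  fun _ _ h => min_le_min (max_le_max h le_rfl) le_rfl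

lemma clamp_cont : Continuous (fun x : ℝ => min (max x 0) 1) :=
  ((continuous_id.max continuous_const).min continuous_const)

lemma clamp_eq {x : ℝ} (hx : x ∈ Icc (0:ℝ) 1) : min (max x 0) 1 = x := by
  rw [max_eq_left hx.1, min_eq_left hx.2]

/-- Restriction of a monotone feasible curve between two parameters. -/
lemma monFeasible_reparam {F : Set (ℝ × ℝ)} {γ : ℝ → ℝ × ℝ}
    (hc : ContinuousOn γ (Icc 0 1)) (hF : ∀ t ∈ Icc (0:ℝ) 1, γ t ∈ F)
    (hm : MonotoneCurve γ) {p q : ℝ} (hp : p ∈ Icc (0:ℝ) 1) (hq : q ∈ Icc (0:ℝ) 1)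
    (hpq : p ≤ q) : MonFeasible F (γ p) (γ q) := by
  set c : ℝ → ℝ := fun t => min (max (p + t * (q - p)) 0) 1 with hcdef
  have hcm : ∀ t, c t ∈ Icc (0:ℝ) 1 := fun t => clamp_mem _
  have hmono : Monotone c := by
    intro x y hxy
    have h := sub_nonneg.mpr hpq
    exact clamp_mono (by nlinarith)
  have hc0 : c 0 = p := by
    have : p + 0 * (q - p) = p := by ring
    simp only [hcdef, this]; exact clamp_eq hp
  have hc1 : c 1 = q := by
    have : p + 1 * (q - p) = q := by ring
    simp only [hcdef, this]; exact clamp_eq hq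
  have hccont : Continuous c :=
    clamp_cont.comp (continuous_const.add (continuous_id.mul continuous_const))
  refine ⟨fun t => γ (c t), ?_, by show γ (c 0) = γ p; rw [hc0], by show γ (c 1) = γ q; rw [hc1], fun t _ => hF _ (hcm t), ?_, ?_⟩
  · exact hc.comp hccont.continuousOn (fun t _ => hcm t)
  · exact fun x _ y _ hxy => hm.1 (hcm x) (hcm y) (hmono hxy)
  · exact fun x _ y _ hxy => hm.2 (hcm x) (hcm y) (hmono hxy)

/-- Concatenation of monotone feasible curves. -/
lemma monFeasible_trans {F : Set (ℝ × ℝ)} {a b c : ℝ × ℝ}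
    (h1 : MonFeasible F a b) (h2 : MonFeasible F b c) : MonFeasible F a c := by
  classical
  obtain ⟨γ, hγc, hγ0, hγ1, hγF, hγm⟩ := h1
  obtain ⟨δ, hδc, hδ0, hδ1, hδF, hδm⟩ := h2
  set c1 : ℝ → ℝ := fun t => min (max (2 * t) 0) 1 with hc1def
  set c2 : ℝ → ℝ := fun t => min (max (2 * t - 1) 0) 1 with hc2def
  have hc1m : ∀ t, c1 t ∈ Icc (0:ℝ) 1 := fun t => clamp_mem _
  have hc2m : ∀ t, c2 t ∈ Icc (0:ℝ) 1 := fun t => clamp_mem _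
  have hc1mono : Monotone c1 := fun x y h => clamp_mono (by linarith)
  have hc2mono : Monotone c2 := fun x y h => clamp_mono (by linarith)
  have hc1half : c1 (1/2) = 1 := by norm_num [hc1def]
  have hc2half : c2 (1/2) = 0 := by norm_num [hc2def]
  set η : ℝ → ℝ × ℝ := fun t => if t ≤ 1/2 then γ (c1 t) else δ (c2 t) with hηdef
  have hγcomp : Continuous (fun t => γ (c1 t)) := by
    rw [← continuousOn_univ]
    exact hγc.comp (clamp_cont.comp (continuous_const.mul continuous_id)).continuousOn
      (fun t _ => hc1m t)
  have hδcomp : Continuous (fun t => δ (c2 t)) := by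
    rw [← continuousOn_univ]
    exact hδc.comp (clamp_cont.comp ((continuous_const.mul continuous_id).sub
      continuous_const)).continuousOn (fun t _ => hc2m t)
  have hagree : ∀ x : ℝ, x = 1/2 → γ (c1 x) = δ (c2 x) := by
    intro x hx; subst hx; rw [hc1half, hc2half, hγ1, hδ0]
  have hηcont : Continuous η :=
    Continuous.if_le hγcomp hδcomp continuous_id continuous_const hagree
  have hmono : ∀ P : ℝ × ℝ → ℝ, MonotoneOn (fun t => P (γ t)) (Icc 0 1) →
      MonotoneOn (fun t => P (δ t)) (Icc 0 1) → MonotoneOn (fun t => P (η t)) (Icc 0 1) := by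
    intro P hPγ hPδ x hx y hy hxy
    simp only [hηdef]
    by_cases hx2 : x ≤ 1/2 <;> by_cases hy2 : y ≤ 1/2
    · rw [if_pos hx2, if_pos hy2]; exact hPγ (hc1m x) (hc1m y) (hc1mono hxy)
    · rw [if_pos hx2, if_neg hy2]
      have e1 : P (γ (c1 x)) ≤ P (γ 1) :=
        hPγ (hc1m x) ⟨zero_le_one, le_rfl⟩ (hc1m x).2
      have e2 : P (δ 0) ≤ P (δ (c2 y)) :=
        hPδ ⟨le_rfl, zero_le_one⟩ (hc2m y) (hc2m y).1
      rw [hγ1, ← hδ0] at e1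
      exact e1.trans e2
    · exact absurd (hxy.trans hy2) hx2
    · rw [if_neg hx2, if_neg hy2]; exact hPδ (hc2m x) (hc2m y) (hc2mono hxy)
  refine ⟨η, hηcont.continuousOn, ?_, ?_, ?_, ?_, ?_⟩
  · have : (0:ℝ) ≤ 1/2 := by norm_num
    simp only [hηdef, if_pos this]
    have : c1 0 = 0 := by norm_num [hc1def]
    rw [this, hγ0]
  · have : ¬ (1:ℝ) ≤ 1/2 := by norm_num
    simp only [hηdef, if_neg this]
    have : c2 1 = 1 := by norm_num [hc2def]
    rw [this, hδ1]
  · intro t _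
    simp only [hηdef]
    split
    · exact hγF _ (hc1m t)
    · exact hδF _ (hc2m t)
  · exact hmono _ hγm.1 hδm.1
  · exact hmono _ hγm.2 hδm.2

/-- Crossing lemma: two monotone feasible curves whose endpoints are vertically aligned and
horizontally interleaved must cross, so the start of each reaches the end of the other. -/
lemma monFeasible_crossing {F : Set (ℝ × ℝ)} {a b c d : ℝ × ℝ}
    (hab : MonFeasible F a b) (hcd : MonFeasible F c d)
    (h1 : a.2 = c.2) (h2 : b.2 = d.2) (h3 : a.1 ≤ c.1) (h4 : d.1 ≤ b.1) :
    MonFeasible F a d ∧ MonFeasible F c b := by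
  obtain ⟨γ, hγc, hγ0, hγ1, hγF, hγm⟩ := hab
  obtain ⟨δ, hδc, hδ0, hδ1, hδF, hδm⟩ := hcd
  set us : ℝ → ℝ := fun s => (γ s).1 + (γ s).2 with husdef
  set vs : ℝ → ℝ := fun t => (δ t).1 + (δ t).2 with hvsdef
  have husc : ContinuousOn us (Icc 0 1) :=
    (continuous_fst.comp_continuousOn hγc).add (continuous_snd.comp_continuousOn hγc)
  have hvsc : ContinuousOn vs (Icc 0 1) :=
    (continuous_fst.comp_continuousOn hδc).add (continuous_snd.comp_continuousOn hδc)
  have hvsm : MonotoneOn vs (Icc 0 1) :=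
    fun x hx y hy h => add_le_add (hδm.1 hx hy h) (hδm.2 hx hy h)
  -- for every parameter `t` of `δ`, find a parameter of `γ` with the same coordinate sum
  have hex : ∀ t : ℝ, ∃ s, t ∈ Icc (0:ℝ) 1 → s ∈ Icc (0:ℝ) 1 ∧ us s = vs t := by
    intro t
    by_cases ht : t ∈ Icc (0:ℝ) 1
    · have hmem : vs t ∈ Icc (us 0) (us 1) := by
        constructor
        · have : vs 0 ≤ vs t := hvsm ⟨le_rfl, zero_le_one⟩ ht ht.1
          have h0 : us 0 ≤ vs 0 := by
            simp only [husdef, hvsdef, hγ0, hδ0]; linarith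
          linarith
        · have : vs t ≤ vs 1 := hvsm ht ⟨zero_le_one, le_rfl⟩ ht.2
          have h0 : vs 1 ≤ us 1 := by
            simp only [husdef, hvsdef, hγ1, hδ1]; linarith
          linarith
      obtain ⟨s, hs, hs2⟩ := intermediate_value_Icc zero_le_one husc hmem
      exact ⟨s, fun _ => ⟨hs, hs2⟩⟩
    · exact ⟨0, fun h => absurd h ht⟩
  choose sf hsf using hex
  -- 1-Lipschitz property of the "difference" along a monotone curve w.r.t. the "sum"
  have key : ∀ s₁ ∈ Icc (0:ℝ) 1, ∀ s₂ ∈ Icc (0:ℝ) 1,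
      |((γ s₁).1 - (γ s₁).2) - ((γ s₂).1 - (γ s₂).2)| ≤ |us s₁ - us s₂| := by
    intro s₁ hs₁ s₂ hs₂
    rcases le_total s₁ s₂ with h | h
    · have e1 : (γ s₁).1 ≤ (γ s₂).1 := hγm.1 hs₁ hs₂ h
      have e2 : (γ s₁).2 ≤ (γ s₂).2 := hγm.2 hs₁ hs₂ h
      have hsum : us s₁ - us s₂ ≤ 0 := by simp only [husdef]; linarith
      rw [abs_of_nonpos hsum, abs_le]
      constructor <;> simp only [husdef] <;> linarith
    · have e1 : (γ s₂).1 ≤ (γ s₁).1 := hγm.1 hs₂ hs₁ h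
      have e2 : (γ s₂).2 ≤ (γ s₁).2 := hγm.2 hs₂ hs₁ h
      have hsum : 0 ≤ us s₁ - us s₂ := by simp only [husdef]; linarith
      rw [abs_of_nonneg hsum, abs_le]
      constructor <;> simp only [husdef] <;> linarith
  -- the comparison function g
  set G : ℝ → ℝ := fun t => (γ (sf t)).1 - (γ (sf t)).2 with hGdef
  have hGcont : ContinuousOn G (Icc 0 1) := by
    intro t ht
    rw [Metric.continuousWithinAt_iff]
    intro ε hε
    have hv : ContinuousWithinAt vs (Icc 0 1) t := hvsc t ht
    rw [Metric.continuousWithinAt_iff] at hv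
    obtain ⟨d', hd', hball⟩ := hv ε hε
    refine ⟨d', hd', fun t' ht' hlt => ?_⟩
    have h1' := hsf t ht
    have h2' := hsf t' ht'
    calc dist (G t') (G t)
        = |((γ (sf t')).1 - (γ (sf t')).2) - ((γ (sf t)).1 - (γ (sf t)).2)| := Real.dist_eq _ _
      _ ≤ |us (sf t') - us (sf t)| := key _ h2'.1 _ h1'.1
      _ = dist (vs t') (vs t) := by rw [h2'.2, h1'.2, Real.dist_eq]
      _ < ε := hball ht' hlt
  set g : ℝ → ℝ := fun t => G t - ((δ t).1 - (δ t).2) with hgdef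
  have hgcont : ContinuousOn g (Icc 0 1) :=
    hGcont.sub ((continuous_fst.comp_continuousOn hδc).sub
      (continuous_snd.comp_continuousOn hδc))
  have hg0 : g 0 ≤ 0 := by
    have h0 := hsf 0 ⟨le_rfl, zero_le_one⟩
    have hy : (γ 0).2 ≤ (γ (sf 0)).2 := hγm.2 ⟨le_rfl, zero_le_one⟩ h0.1 h0.1.1
    have hsum : (γ (sf 0)).1 + (γ (sf 0)).2 = (δ 0).1 + (δ 0).2 := h0.2
    simp only [hgdef, hGdef]
    rw [hγ0] at hy
    rw [hδ0] at hsum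
    rw [hδ0, h1] at *
    linarith
  have hg1 : 0 ≤ g 1 := by
    have h0 := hsf 1 ⟨zero_le_one, le_rfl⟩
    have hy : (γ (sf 1)).2 ≤ (γ 1).2 := hγm.2 h0.1 ⟨zero_le_one, le_rfl⟩ h0.1.2
    have hsum : (γ (sf 1)).1 + (γ (sf 1)).2 = (δ 1).1 + (δ 1).2 := h0.2
    simp only [hgdef, hGdef]
    rw [hγ1] at hy
    rw [hδ1] at hsum
    rw [hδ1, h2] at *
    linarith
  obtain ⟨t, htIcc, hgt⟩ := intermediate_value_Icc zero_le_one hgcont ⟨hg0, hg1⟩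
  have hst := hsf t htIcc
  have hpt : γ (sf t) = δ t := by
    have hsum : (γ (sf t)).1 + (γ (sf t)).2 = (δ t).1 + (δ t).2 := hst.2
    have hdiff : (γ (sf t)).1 - (γ (sf t)).2 = (δ t).1 - (δ t).2 := by
      have : g t = 0 := hgt
      simp only [hgdef, hGdef] at this
      linarith
    have hx : (γ (sf t)).1 = (δ t).1 := by linarith
    have hy : (γ (sf t)).2 = (δ t).2 := by linarith
    exact Prod.ext hx hy
  constructor
  · -- a ↝ γ (sf t) = δ t ↝ d
    have p1 : MonFeasible F a (γ (sf t)) := by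
      have := monFeasible_reparam hγc hγF hγm ⟨le_rfl, zero_le_one⟩ hst.1 hst.1.1
      rwa [hγ0] at this
    have p2 : MonFeasible F (γ (sf t)) d := by
      have := monFeasible_reparam hδc hδF hδm htIcc ⟨zero_le_one, le_rfl⟩ htIcc.2
      rwa [hδ1, ← hpt] at this
    exact monFeasible_trans p1 p2
  · -- c ↝ δ t = γ (sf t) ↝ b
    have p1 : MonFeasible F c (δ t) := by
      have := monFeasible_reparam hδc hδF hδm ⟨le_rfl, zero_le_one⟩ htIcc htIcc.1
      rwa [hδ0] at this
    have p2 : MonFeasible F (δ t) b := by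
      have := monFeasible_reparam hγc hγF hγm hst.1 ⟨zero_le_one, le_rfl⟩ hst.1.2
      rwa [hγ1, hpt] at this
    exact monFeasible_trans p1 p2

/-- for `0 ≤ i < j` and `u ∈ R(i)`, the set of points of row `j` reachable
from `u` equals `R(j)` intersected with the horizontal interval `[lp_j(u), rp_j(u)]`. -/
theorem reach_eq_global_inter_pointers (F : Set (ℝ × ℝ)) (i j m : ℝ)
    (h0i : 0 ≤ i) (hij : i < j) (hjm : j ≤ m)
    (u : ℝ × ℝ) (hu : u ∈ Rrow F i)
    (lp rp : ℝ × ℝ)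
    (hlp : lp.2 = j ∧ MonFeasible F u lp ∧
      ∀ w : ℝ × ℝ, w.2 = j → MonFeasible F u w → lp.1 ≤ w.1)
    (hrp : rp.2 = j ∧ MonFeasible F u rp ∧
      ∀ w : ℝ × ℝ, w.2 = j → MonFeasible F u w → w.1 ≤ rp.1) :
    ReachRow F j {u} = Rrow F j ∩ {w : ℝ × ℝ | lp.1 ≤ w.1 ∧ w.1 ≤ rp.1} := by
  obtain ⟨hu2, u₁, hu₁, hpath⟩ := hu
  ext w
  simp only [Rrow, ReachRow, mem_setOf_eq, mem_inter_iff, mem_singleton_iff, mem_sep_iff]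
  constructor
  · rintro ⟨hw2, x, rfl, hxw⟩
    exact ⟨⟨hw2, u₁, hu₁, monFeasible_trans hpath hxw⟩,
      hlp.2.2 w hw2 hxw, hrp.2.2 w hw2 hxw⟩
  · rintro ⟨⟨hw2, u₀, hu₀, hσ⟩, hl, hr⟩
    refine ⟨hw2, u, rfl, ?_⟩
    obtain ⟨σ, hσc, hσ0, hσ1, hσF, hσm⟩ := hσ
    have hy : ContinuousOn (fun t => (σ t).2) (Icc 0 1) := continuous_snd.comp_continuousOn hσc
    have hmem : i ∈ Icc ((σ 0).2) ((σ 1).2) := by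
      rw [hσ0, hσ1, hu₀.2, hw2]; exact ⟨h0i, hij.le⟩
    obtain ⟨t₀, ht₀, hti⟩ := intermediate_value_Icc zero_le_one hy hmem
    have hti' : (σ t₀).2 = i := hti
    have hu'w : MonFeasible F (σ t₀) w := by
      have := monFeasible_reparam hσc hσF hσm ht₀ ⟨zero_le_one, le_rfl⟩ ht₀.2
      rwa [hσ1] at this
    rcases le_total (σ t₀).1 u.1 with hcase | hcase
    · exact (monFeasible_crossing hu'w hlp.2.1 (by rw [hti', hu2])
        (by rw [hw2, hlp.1]) hcase hl).2
    · exact (monFeasible_crossing hrp.2.1 hu'w (by rw [hu2, hti'])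
        (by rw [hrp.1, hw2]) hcase hr).1
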